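/- For all complex numbers a, z and all positive integers N, |cos(z/N) − cos(a·z/N)| ≤ (|a²−1|/(2N²))·|z|²·exp((max(1,|a|)+1)·|z|/N). -/

import Mathlib

open Complex

lemma norm_cos_le' (u : ℂ) : ‖Complex.cos u‖ ≤ Real.exp ‖u‖ := by
  rw [Complex.cos, norm_div]
  have h1 : ‖Complex.exp (u * I)‖ ≤ Real.exp ‖u‖ := by
    rw [Complex.norm_exp]
    apply Real.exp_le_exp.2
    calc (u * I).re ≤ ‖u * I‖ := Complex.re_le_norm _
      _ = ‖u‖ := by simp
  have h2 : ‖Complex.exp (-u * I)‖ ≤ Real.exp ‖u‖ := by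
    rw [Complex.norm_exp]
    apply Real.exp_le_exp.2
    calc (-u * I).re ≤ ‖-u * I‖ := Complex.re_le_norm _
      _ = ‖u‖ := by simp
  calc ‖Complex.exp (u * I) + Complex.exp (-u * I)‖ / ‖(2:ℂ)‖
      ≤ (Real.exp ‖u‖ + Real.exp ‖u‖) / 2 := by
        apply div_le_div₀ (by positivity) ((norm_add_le _ _).trans (add_le_add h1 h2))
          (by norm_num) (by simp)
    _ = Real.exp ‖u‖ := by ring

lemma norm_sin_le' (w : ℂ) : ‖Complex.sin w‖ ≤ ‖w‖ * Real.exp ‖w‖ := by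
  have h := Convex.norm_image_sub_le_of_norm_hasDerivWithin_le
    (f := Complex.sin) (f' := Complex.cos) (s := Metric.closedBall (0:ℂ) ‖w‖) (x := 0) (y := w)
    (C := Real.exp ‖w‖)
    (fun x _ => (Complex.hasDerivAt_sin x).hasDerivWithinAt)
    (fun x hx => (norm_cos_le' x).trans (Real.exp_le_exp.2 (by simpa using hx)))
    (convex_closedBall _ _) (Metric.mem_closedBall.2 (by simp)) (Metric.mem_closedBall.2 (by simp [dist_eq_norm]))
  simpa [mul_comm] using h

theorem cos_diff_bound (a z : ℂ) (N : ℕ) (hN : 1 ≤ N) :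
    ‖Complex.cos (z / N) - Complex.cos (a * z / N)‖ ≤
      ‖a ^ 2 - 1‖ / (2 * N ^ 2) * ‖z‖ ^ 2 *
        Real.exp ((max 1 ‖a‖ + 1) * ‖z‖ / N) := by
  have hN0 : (0:ℝ) < N := by exact_mod_cast hN
  set u := (1 + a) * z / (2 * N) with hu
  set v := (1 - a) * z / (2 * N) with hv
  have key : Complex.cos (z / N) - Complex.cos (a * z / N) =
      -2 * Complex.sin u * Complex.sin v := by
    rw [hu, hv]
    have hNne : (N:ℂ) ≠ 0 := by exact_mod_cast hN0.ne'
    rw [Complex.cos_sub_cos]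
    ring_nf
  rw [key]
  have hsu := norm_sin_le' u
  have hsv := norm_sin_le' v
  have hnu : ‖u‖ = ‖1 + a‖ * ‖z‖ / (2 * N) := by
    rw [hu]; simp [norm_div, norm_mul]
  have hnv : ‖v‖ = ‖1 - a‖ * ‖z‖ / (2 * N) := by
    rw [hv]; simp [norm_div, norm_mul]
  have hbound : ‖u‖ + ‖v‖ ≤ (max 1 ‖a‖ + 1) * ‖z‖ / N := by
    rw [hnu, hnv]
    have h1 : ‖1 + a‖ ≤ 1 + ‖a‖ := (norm_add_le _ _).trans (by simp)
    have h2 : ‖1 - a‖ ≤ 1 + ‖a‖ := (norm_sub_le _ _).trans (by simp)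
    have h3 : ‖a‖ ≤ max 1 ‖a‖ := le_max_right _ _
    have hz : (0:ℝ) ≤ ‖z‖ := norm_nonneg _
    have hsum : ‖1 + a‖ + ‖1 - a‖ ≤ 2 * (max 1 ‖a‖ + 1) := by
      have h4 : (1:ℝ) ≤ max 1 ‖a‖ := le_max_left _ _
      linarith
    rw [← add_div, div_le_div_iff₀ (by positivity) hN0]
    nlinarith [mul_le_mul_of_nonneg_right (mul_le_mul_of_nonneg_right hsum hz) hN0.le]
  calc ‖-2 * Complex.sin u * Complex.sin v‖
      = 2 * ‖Complex.sin u‖ * ‖Complex.sin v‖ := by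
        simp [norm_mul, mul_assoc]
    _ ≤ 2 * (‖u‖ * Real.exp ‖u‖) * (‖v‖ * Real.exp ‖v‖) := by
        apply mul_le_mul _ hsv (norm_nonneg _) (by positivity)
        apply mul_le_mul_of_nonneg_left hsu (by norm_num)
    _ = 2 * ‖u‖ * ‖v‖ * Real.exp (‖u‖ + ‖v‖) := by
        rw [Real.exp_add]; ring
    _ ≤ 2 * ‖u‖ * ‖v‖ * Real.exp ((max 1 ‖a‖ + 1) * ‖z‖ / N) := by
        apply mul_le_mul_of_nonneg_left (Real.exp_le_exp.2 hbound) (by positivity)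
    _ = ‖a ^ 2 - 1‖ / (2 * N ^ 2) * ‖z‖ ^ 2 * Real.exp ((max 1 ‖a‖ + 1) * ‖z‖ / N) := by
        rw [hnu, hnv]
        have : ‖a ^ 2 - 1‖ = ‖1 + a‖ * ‖1 - a‖ := by
          rw [show a ^ 2 - 1 = -((1 + a) * (1 - a)) by ring, norm_neg, norm_mul]
        rw [this]
        field_simp
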